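/- arXiv:2310.14998 — 6 statements merged into one kernel-verified Lean document; each statement's English description precedes it below -/
import Mathlib

section
/- Let P = conv{±(1,1), ±(1,0), ±(0,1)} ⊂ ℝ² and u = (1,1). For any v, w ∈ P, with t = |ω(u,v)| and s = |ω(u,w)| (where ω is the standard area form on ℝ²), one has |ω(v,w)| ≤ t + s − ts. -/
open Set

/-- The standard area (symplectic) form on ℝ². -/
noncomputable def omega2 (v w : ℝ × ℝ) : ℝ := v.1 * w.2 - v.2 * w.1

/-- The hexagon P = conv{±(1,1), ±(1,0), ±(0,1)}. -/
noncomputable def hexP : Set (ℝ × ℝ) :=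
  convexHull ℝ {(1,1), (1,0), (0,1), (-1,-1), (-1,0), (0,-1)}

lemma hexP_bounds {p : ℝ × ℝ} (hp : p ∈ hexP) :
    |p.1| ≤ 1 ∧ |p.2| ≤ 1 ∧ |p.1 - p.2| ≤ 1 := by
  have hsub : hexP ⊆ {q : ℝ × ℝ | |q.1| ≤ 1 ∧ |q.2| ≤ 1 ∧ |q.1 - q.2| ≤ 1} := by
    apply convexHull_min
    · intro q hq
      simp only [mem_insert_iff, mem_singleton_iff] at hq
      rcases hq with h|h|h|h|h|h <;> subst h <;> norm_num
    · intro x hx y hy a b ha hb hab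
      obtain ⟨hx1, hx2, hx3⟩ := hx
      obtain ⟨hy1, hy2, hy3⟩ := hy
      refine ⟨?_, ?_, ?_⟩ <;> simp only [Prod.smul_fst, Prod.smul_snd, Prod.fst_add,
        Prod.snd_add, smul_eq_mul]
      · calc |a * x.1 + b * y.1| ≤ |a * x.1| + |b * y.1| := abs_add_le _ _
          _ = a * |x.1| + b * |y.1| := by
              rw [abs_mul, abs_mul, abs_of_nonneg ha, abs_of_nonneg hb]
          _ ≤ a * 1 + b * 1 := by gcongr
          _ = 1 := by linarith
      · calc |a * x.2 + b * y.2| ≤ |a * x.2| + |b * y.2| := abs_add_le _ _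
          _ = a * |x.2| + b * |y.2| := by
              rw [abs_mul, abs_mul, abs_of_nonneg ha, abs_of_nonneg hb]
          _ ≤ a * 1 + b * 1 := by gcongr
          _ = 1 := by linarith
      · have : a * x.1 + b * y.1 - (a * x.2 + b * y.2)
            = a * (x.1 - x.2) + b * (y.1 - y.2) := by ring
        rw [this]
        calc |a * (x.1 - x.2) + b * (y.1 - y.2)|
            ≤ |a * (x.1 - x.2)| + |b * (y.1 - y.2)| := abs_add_le _ _
          _ = a * |x.1 - x.2| + b * |y.1 - y.2| := by
              rw [abs_mul, abs_mul, abs_of_nonneg ha, abs_of_nonneg hb]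
          _ ≤ a * 1 + b * 1 := by gcongr
          _ = 1 := by linarith
  exact hsub hp

lemma key (a b c d : ℝ) (ha : -1 ≤ a) (hb : b ≤ 1) (hc : -1 ≤ c) (hd : d ≤ 1)
    (ht : a ≤ b) (hs : c ≤ d) :
    |a * d - b * c| ≤ (b - a) + (d - c) - (b - a) * (d - c) := by
  have h1 : 0 ≤ (d - c) * (1 - b) := mul_nonneg (by linarith) (by linarith)
  have h2 : 0 ≤ (b - a) * (1 + c) := mul_nonneg (by linarith) (by linarith)
  have h3 : 0 ≤ (d - c) * (1 + a) := mul_nonneg (by linarith) (by linarith)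
  have h4 : 0 ≤ (b - a) * (1 - d) := mul_nonneg (by linarith) (by linarith)
  rcases abs_cases (a * d - b * c) with ⟨h, _⟩ | ⟨h, _⟩ <;> rw [h] <;> nlinarith

theorem stmt2 (v w : ℝ × ℝ) (hv : v ∈ hexP) (hw : w ∈ hexP) :
    |omega2 v w| ≤ |omega2 (1,1) v| + |omega2 (1,1) w| - |omega2 (1,1) v| * |omega2 (1,1) w| := by
  obtain ⟨hv1, hv2, hv3⟩ := hexP_bounds hv
  obtain ⟨hw1, hw2, hw3⟩ := hexP_bounds hw
  obtain ⟨a, b⟩ := v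
  obtain ⟨c, d⟩ := w
  simp only [omega2] at *
  rw [abs_le] at hv1 hv2 hw1 hw2
  obtain ⟨ha1, ha2⟩ := hv1
  obtain ⟨hb1, hb2⟩ := hv2
  obtain ⟨hc1, hc2⟩ := hw1
  obtain ⟨hd1, hd2⟩ := hw2
  have e1 : (1:ℝ) * b - 1 * a = b - a := by ring
  have e2 : (1:ℝ) * d - 1 * c = d - c := by ring
  rw [e1, e2]
  rcases le_total a b with h1 | h1 <;> rcases le_total c d with h2 | h2
  · rw [abs_of_nonneg (by linarith : (0:ℝ) ≤ b - a),
        abs_of_nonneg (by linarith : (0:ℝ) ≤ d - c)]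
    exact key a b c d ha1 hb2 hc1 hd2 h1 h2
  · rw [abs_of_nonneg (by linarith : (0:ℝ) ≤ b - a),
        abs_of_nonpos (by linarith : d - c ≤ (0:ℝ))]
    have h := key a b (-c) (-d) ha1 hb2 (by linarith) (by linarith) h1 (by linarith)
    have e : a * (-d) - b * (-c) = -(a * d - b * c) := by ring
    rw [e, abs_neg] at h
    calc |a * d - b * c| ≤ (b - a) + (-d - -c) - (b - a) * (-d - -c) := h
      _ = b - a + -(d - c) - (b - a) * -(d - c) := by ring
  · rw [abs_of_nonpos (by linarith : b - a ≤ (0:ℝ)),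
        abs_of_nonneg (by linarith : (0:ℝ) ≤ d - c)]
    have h := key (-a) (-b) c d (by linarith) (by linarith) hc1 hd2 (by linarith) h2
    have e : (-a) * d - (-b) * c = -(a * d - b * c) := by ring
    rw [e, abs_neg] at h
    calc |a * d - b * c| ≤ (-b - -a) + (d - c) - (-b - -a) * (d - c) := h
      _ = -(b - a) + (d - c) - -(b - a) * (d - c) := by ring
  · rw [abs_of_nonpos (by linarith : b - a ≤ (0:ℝ)),
        abs_of_nonpos (by linarith : d - c ≤ (0:ℝ))]
    have h := key (-a) (-b) (-c) (-d) (by linarith) (by linarith) (by linarith)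
      (by linarith) (by linarith) (by linarith)
    have e : (-a) * (-d) - (-b) * (-c) = a * d - b * c := by ring
    rw [e] at h
    calc |a * d - b * c| ≤ (-b - -a) + (-d - -c) - (-b - -a) * (-d - -c) := h
      _ = -(b - a) + -(d - c) - -(b - a) * -(d - c) := by ring
end

section
/- The hexagon P = conv{±(1,1), ±(1,0), ±(0,1)} ⊂ ℝ² is symplectically self-polar: P = P^ω, where P^ω = {y ∈ ℝ² : ∀ x ∈ P, ω(x,y) ≤ 1} and ω is the standard area form. -/
open Set

/-- Symplectic polar in ℝ². -/
def sPolar2 (X : Set (ℝ × ℝ)) : Set (ℝ × ℝ) := {y | ∀ x ∈ X, omega2 x y ≤ 1}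

lemma comb_mem {s : Set (ℝ × ℝ)} (hs : Convex ℝ s) {v1 v2 : ℝ × ℝ}
    (h0 : ((0 : ℝ), (0 : ℝ)) ∈ s) (h1 : v1 ∈ s) (h2 : v2 ∈ s) {t1 t2 : ℝ}
    (ht1 : 0 ≤ t1) (ht2 : 0 ≤ t2) (hsum : t1 + t2 ≤ 1) :
    t1 • v1 + t2 • v2 ∈ s := by
  rcases eq_or_lt_of_le (add_nonneg ht1 ht2) with h | h
  · have e1 : t1 = 0 := by linarith
    have e2 : t2 = 0 := by linarith
    simp only [e1, e2, zero_smul, add_zero]; exact h0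
  · set c := t1 + t2 with hc
    have hz : (t1 / c) • v1 + (t2 / c) • v2 ∈ s :=
      hs h1 h2 (div_nonneg ht1 h.le) (div_nonneg ht2 h.le) (by field_simp; exact hc.symm)
    have hmem := hs hz h0 h.le (by linarith : (0:ℝ) ≤ 1 - c) (by ring)
    have hne : c ≠ 0 := ne_of_gt h
    have hceq : c • ((t1 / c) • v1 + (t2 / c) • v2) + (1 - c) • ((0:ℝ), (0:ℝ))
        = t1 • v1 + t2 • v2 := by
      rw [smul_add, smul_smul, smul_smul]
      have e1 : c * (t1 / c) = t1 := by field_simp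
      have e2 : c * (t2 / c) = t2 := by field_simp
      rw [e1, e2]
      simp
    rwa [hceq] at hmem
  
lemma zero_mem_hexP : ((0 : ℝ), (0 : ℝ)) ∈ hexP := by
  have h1 : ((1:ℝ),(1:ℝ)) ∈ hexP := subset_convexHull ℝ _ (by simp)
  have h2 : ((-1:ℝ),(-1:ℝ)) ∈ hexP := subset_convexHull ℝ _ (by simp [Prod.ext_iff])
  have hmem := (convex_convexHull ℝ _) h1 h2 (by norm_num : (0:ℝ) ≤ 1/2)
    (by norm_num : (0:ℝ) ≤ 1/2) (by norm_num)
  have : ((0:ℝ), (0:ℝ)) = (1/2 : ℝ) • ((1:ℝ),(1:ℝ)) + (1/2 : ℝ) • ((-1:ℝ),(-1:ℝ)) := by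
    norm_num [Prod.ext_iff, Prod.smul_def]
  rw [this]
  exact hmem

theorem stmt3 : hexP = sPolar2 hexP := by
  have vmem : ∀ v ∈ ({((1:ℝ),(1:ℝ)), (1,0), (0,1), (-1,-1), (-1,0), (0,-1)} : Set (ℝ × ℝ)),
      v ∈ hexP := fun v hv => subset_convexHull ℝ _ hv
  ext y
  constructor
  · -- hexP ⊆ polar
    intro hy x hx
    -- first reduce x to vertices
    have hlin : ∀ v : ℝ × ℝ, IsLinearMap ℝ (fun x : ℝ × ℝ => omega2 x v) := by
      intro v
      constructor
      · intro a b; simp [omega2]; ring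
      · intro c a; simp [omega2, Prod.smul_def]; ring
    have key : ∀ v ∈ ({((1:ℝ),(1:ℝ)), (1,0), (0,1), (-1,-1), (-1,0), (0,-1)} : Set (ℝ × ℝ)),
        omega2 v y ≤ 1 := by
      intro v hv
      have hconv : Convex ℝ {w : ℝ × ℝ | omega2 v w ≤ 1} := by
        have : IsLinearMap ℝ (fun w : ℝ × ℝ => omega2 v w) := by
          constructor
          · intro a b; simp [omega2]; ring
          · intro c a; simp [omega2, Prod.smul_def]; ring
        exact convex_halfSpace_le this 1
      have : hexP ⊆ {w : ℝ × ℝ | omega2 v w ≤ 1} := by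
        apply convexHull_min _ hconv
        intro w hw
        simp only [mem_insert_iff, mem_singleton_iff] at hw hv
        rcases hv with rfl|rfl|rfl|rfl|rfl|rfl <;>
          rcases hw with rfl|rfl|rfl|rfl|rfl|rfl <;> simp [omega2] <;> norm_num
      exact this hy
    have hconv : Convex ℝ {x : ℝ × ℝ | omega2 x y ≤ 1} :=
      convex_halfSpace_le (hlin y) 1
    have : hexP ⊆ {x : ℝ × ℝ | omega2 x y ≤ 1} :=
      convexHull_min key hconv
    exact this hx
  · -- polar ⊆ hexP
    intro hy
    set a := y.1 with ha
    set b := y.2 with hb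
    have c1 : b - a ≤ 1 := by
      have := hy _ (vmem (1,1) (by simp)); simp [omega2] at this; linarith
    have c2 : b ≤ 1 := by
      have := hy _ (vmem (1,0) (by simp)); simp [omega2] at this; linarith
    have c3 : -a ≤ 1 := by
      have := hy _ (vmem (0,1) (by simp)); simp [omega2] at this; linarith
    have c4 : a - b ≤ 1 := by
      have := hy _ (vmem (-1,-1) (by simp [Prod.ext_iff])); simp [omega2] at this; linarith
    have c5 : -b ≤ 1 := by
      have := hy _ (vmem (-1,0) (by simp [Prod.ext_iff])); simp [omega2] at this; linarith
    have c6 : a ≤ 1 := by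
      have := hy _ (vmem (0,-1) (by simp [Prod.ext_iff])); simp [omega2] at this; linarith
    have hcv : Convex ℝ hexP := convex_convexHull ℝ _
    have h0 := zero_mem_hexP
    have hy' : y = (a, b) := rfl
    rw [hy']
    rcases le_total 0 a with hA | hA <;> rcases le_total 0 b with hB | hB
    · rcases le_total b a with hAB | hAB
      · have := comb_mem hcv h0 (vmem (1,1) (by simp)) (vmem (1,0) (by simp))
          hB (by linarith : (0:ℝ) ≤ a - b) (by linarith)
        simpa [Prod.smul_def, Prod.ext_iff] using this
      · have := comb_mem hcv h0 (vmem (1,1) (by simp)) (vmem (0,1) (by simp))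
          hA (by linarith : (0:ℝ) ≤ b - a) (by linarith)
        simpa [Prod.smul_def, Prod.ext_iff] using this
    · -- a ≥ 0 ≥ b
      have := comb_mem hcv h0 (vmem (1,0) (by simp)) (vmem (0,-1) (by simp [Prod.ext_iff]))
        hA (by linarith : (0:ℝ) ≤ -b) (by linarith)
      simpa [Prod.smul_def, Prod.ext_iff] using this
    · -- b ≥ 0 ≥ a
      have := comb_mem hcv h0 (vmem (-1,0) (by simp [Prod.ext_iff])) (vmem (0,1) (by simp))
        (by linarith : (0:ℝ) ≤ -a) hB (by linarith)
      simpa [Prod.smul_def, Prod.ext_iff] using this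
    · rcases le_total b a with hAB | hAB
      · have := comb_mem hcv h0 (vmem (-1,-1) (by simp [Prod.ext_iff])) (vmem (0,-1) (by simp [Prod.ext_iff]))
          (by linarith : (0:ℝ) ≤ -a) (by linarith : (0:ℝ) ≤ a - b) (by linarith)
        simpa [Prod.smul_def, Prod.ext_iff] using this
      · have := comb_mem hcv h0 (vmem (-1,-1) (by simp [Prod.ext_iff])) (vmem (-1,0) (by simp [Prod.ext_iff]))
          (by linarith : (0:ℝ) ≤ -b) (by linarith : (0:ℝ) ≤ b - a) (by linarith)
        simpa [Prod.smul_def, Prod.ext_iff] using this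
end

section
/- Let X ⊂ ℝ^{2n} be a centrally symmetric convex body with 0 in its interior. Then P ⋉_ω X = (P × ℝ^{2n}) ∩ ({u, −u} × X^ω)^ω, where P ⋉_ω X = {(v,x) ∈ P × ℝ^{2n} : |ω₂(u,v)| + ‖x‖_X ≤ 1}, P is the hexagon conv{±(1,1),±(1,0),±(0,1)}, and u = (1,1). -/
open Set Pointwise

/-- The standard symplectic form on ℝ^{2n} = (Fin n → ℝ) × (Fin n → ℝ). -/
noncomputable def symForm (n : ℕ) (x y : (Fin n → ℝ) × (Fin n → ℝ)) : ℝ :=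
  ∑ i, (x.1 i * y.2 i - x.2 i * y.1 i)

/-- The symplectic polar of a set in ℝ^{2n}. -/
def sPolar (n : ℕ) (X : Set ((Fin n → ℝ) × (Fin n → ℝ))) : Set ((Fin n → ℝ) × (Fin n → ℝ)) :=
  {y | ∀ x ∈ X, symForm n x y ≤ 1}

/-- ℝ^{2n+2} = ℝ² × ℝ^{2n}. -/
abbrev Amb (n : ℕ) := (ℝ × ℝ) × ((Fin n → ℝ) × (Fin n → ℝ))

/-- The direct-sum symplectic form on ℝ² × ℝ^{2n}. -/
noncomputable def symFormS (n : ℕ) (p q : Amb n) : ℝ :=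
  omega2 p.1 q.1 + symForm n p.2 q.2

/-- The symplectic polar of a set in ℝ² × ℝ^{2n}. -/
def sPolarS (n : ℕ) (S : Set (Amb n)) : Set (Amb n) :=
  {q | ∀ p ∈ S, symFormS n p q ≤ 1}

/-- The symplectic P-suspension of a centrally symmetric convex body X ⊂ ℝ^{2n}. -/
noncomputable def susp (n : ℕ) (X : Set ((Fin n → ℝ) × (Fin n → ℝ))) : Set (Amb n) :=
  {p | p.1 ∈ hexP ∧ |omega2 (1,1) p.1| + gauge X p.2 ≤ 1}

/-- Skew-symmetry of the symplectic form. -/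
lemma symForm_skew (n : ℕ) (x y : (Fin n → ℝ) × (Fin n → ℝ)) :
    symForm n y x = - symForm n x y := by
  rw [symForm, symForm, ← Finset.sum_neg_distrib]
  exact Finset.sum_congr rfl fun i _ => by ring

lemma symForm_smul_left (n : ℕ) (t : ℝ) (y x : (Fin n → ℝ) × (Fin n → ℝ)) :
    symForm n (t • y) x = t * symForm n y x := by
  rw [symForm, symForm, Finset.mul_sum]
  exact Finset.sum_congr rfl fun i _ => by
    simp only [Prod.smul_fst, Prod.smul_snd, Pi.smul_apply, smul_eq_mul]; ring

lemma symForm_smul_right (n : ℕ) (t : ℝ) (y x : (Fin n → ℝ) × (Fin n → ℝ)) :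
    symForm n y (t • x) = t * symForm n y x := by
  rw [symForm, symForm, Finset.mul_sum]
  exact Finset.sum_congr rfl fun i _ => by
    simp only [Prod.smul_fst, Prod.smul_snd, Pi.smul_apply, smul_eq_mul]; ring

lemma symForm_zero_left (n : ℕ) (x : (Fin n → ℝ) × (Fin n → ℝ)) :
    symForm n 0 x = 0 := by
  simp [symForm]

/-- Every continuous linear functional is represented by the symplectic form. -/
lemma symForm_repr (n : ℕ) (f : ((Fin n → ℝ) × (Fin n → ℝ)) →L[ℝ] ℝ) :
    ∃ y : (Fin n → ℝ) × (Fin n → ℝ), ∀ z, symForm n y z = f z := by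
  refine ⟨(fun i => f (0, Pi.single i 1), fun i => - f (Pi.single i 1, 0)), fun z => ?_⟩
  have hz : z = (∑ i, z.1 i • ((Pi.single i 1 : Fin n → ℝ), (0 : Fin n → ℝ)))
      + (∑ i, z.2 i • ((0 : Fin n → ℝ), (Pi.single i 1 : Fin n → ℝ))) := by
    ext j
    · simp [Prod.fst_sum, Finset.sum_apply, Pi.single_apply, mul_ite]
    · simp [Prod.snd_sum, Finset.sum_apply, Pi.single_apply, mul_ite]
  conv_rhs => rw [hz]
  rw [map_add, map_sum, map_sum]
  simp only [map_smul, smul_eq_mul]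
  rw [symForm, ← Finset.sum_add_distrib]
  exact Finset.sum_congr rfl fun i _ => by dsimp only; ring

/-- Easy direction: elements of the symplectic polar are bounded by the gauge. -/
lemma symForm_le_gauge (n : ℕ) (X : Set ((Fin n → ℝ) × (Fin n → ℝ)))
    (hsym : ∀ x ∈ X, -x ∈ X) (h0 : (0 : (Fin n → ℝ) × (Fin n → ℝ)) ∈ interior X)
    {y : (Fin n → ℝ) × (Fin n → ℝ)} (hy : y ∈ sPolar n X)
    (x : (Fin n → ℝ) × (Fin n → ℝ)) : symForm n y x ≤ gauge X x := by
  have habs : Absorbent ℝ X := absorbent_nhds_zero (mem_interior_iff_mem_nhds.1 h0)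
  refine le_of_forall_gt_imp_ge_of_dense fun t ht => ?_
  obtain ⟨r, hr0, hrt, z, hz, rfl⟩ := exists_lt_of_gauge_lt habs ht
  rw [symForm_smul_right]
  have h1 : symForm n (-z) y ≤ 1 := hy (-z) (hsym z hz)
  have h2 : symForm n (-z) y = - symForm n z y := by
    have := symForm_smul_left n (-1) z y
    simpa using this
  have h3 : symForm n y z ≤ 1 := by
    rw [symForm_skew]; rw [h2] at h1; linarith
  nlinarith

/-- Hard direction: bipolar-type bound via Hahn–Banach separation. -/
lemma gauge_le_of_sPolar (n : ℕ) (X : Set ((Fin n → ℝ) × (Fin n → ℝ)))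
    (hconv : Convex ℝ X) (hcomp : IsCompact X) (hsym : ∀ x ∈ X, -x ∈ X)
    (h0 : (0 : (Fin n → ℝ) × (Fin n → ℝ)) ∈ interior X)
    (x : (Fin n → ℝ) × (Fin n → ℝ)) (c : ℝ)
    (h : ∀ y ∈ sPolar n X, symForm n y x ≤ c) : gauge X x ≤ c := by
  by_contra hlt
  push_neg at hlt
  have h0X : (0 : (Fin n → ℝ) × (Fin n → ℝ)) ∈ X := interior_subset h0
  have hc0 : 0 ≤ c := by
    have := h 0 (fun x' _ => by
      simp [symForm])
    rwa [symForm_zero_left] at this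
  obtain ⟨c', hcc', hc'g⟩ := exists_between hlt
  have hc'0 : 0 < c' := lt_of_le_of_lt hc0 hcc'
  have hx : x ∉ c' • X := fun hx =>
    absurd (gauge_le_of_mem hc'0.le hx) (not_le.2 hc'g)
  obtain ⟨f, u, hfs, hux⟩ := geometric_hahn_banach_closed_point
    (hconv.smul c') ((hcomp.smul c').isClosed) hx
  have hu0 : 0 < u := by
    have : f 0 < u := hfs 0 ⟨0, h0X, smul_zero c'⟩
    simpa using this
  obtain ⟨y, hy⟩ := symForm_repr n f
  set t : ℝ := c' / u with ht
  have ht0 : 0 < t := div_pos hc'0 hu0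
  have hmem : t • y ∈ sPolar n X := by
    intro x' hx'
    have h1 : f (c' • x') < u := hfs _ ⟨x', hx', rfl⟩
    have h2 : f (c' • (-x')) < u := hfs _ ⟨-x', hsym x' hx', rfl⟩
    rw [map_smul, smul_eq_mul] at h1
    rw [map_smul, smul_eq_mul, map_neg] at h2
    have hfx : - (u / c') < f x' := by
      have : -f x' < u / c' := (lt_div_iff₀ hc'0).2 (by linarith)
      linarith
    rw [symForm_skew, symForm_smul_left, hy]
    have h3 : t * (u / c') = 1 := by
      rw [ht]; field_simp
    nlinarith [mul_lt_mul_of_pos_left hfx ht0]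
  have hbig : c < symForm n (t • y) x := by
    rw [symForm_smul_left, hy]
    calc c < c' := hcc'
    _ = t * u := by rw [ht, div_mul_cancel₀ _ hu0.ne']
    _ < t * f x := by exact (mul_lt_mul_iff_right₀ ht0).2 hux
  exact absurd (h _ hmem) (not_le.2 hbig)

theorem stmt5 (n : ℕ) (X : Set ((Fin n → ℝ) × (Fin n → ℝ)))
    (hconv : Convex ℝ X) (hcomp : IsCompact X) (hsym : ∀ x ∈ X, -x ∈ X)
    (h0 : (0 : (Fin n → ℝ) × (Fin n → ℝ)) ∈ interior X) :
    susp n X = (hexP ×ˢ (univ : Set ((Fin n → ℝ) × (Fin n → ℝ)))) ∩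
      sPolarS n (({(1,1), (-1,-1)} : Set (ℝ × ℝ)) ×ˢ sPolar n X) := by
  ext ⟨v, x⟩
  simp only [susp, mem_setOf_eq, mem_inter_iff, mem_prod, mem_univ, and_true, sPolarS]
  constructor
  · rintro ⟨hv, hsum⟩
    refine ⟨hv, ?_⟩
    rintro ⟨w, y⟩ ⟨hw, hy⟩
    have hgauge : symForm n y x ≤ gauge X x := symForm_le_gauge n X hsym h0 hy x
    have habs1 : omega2 (1,1) v ≤ |omega2 (1,1) v| := le_abs_self _
    have habs2 : - omega2 (1,1) v ≤ |omega2 (1,1) v| := neg_le_abs _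
    simp only [mem_insert_iff, mem_singleton_iff] at hw
    rcases hw with rfl | rfl
    · show omega2 (1,1) v + symForm n y x ≤ 1
      linarith
    · show omega2 (-1,-1) v + symForm n y x ≤ 1
      have : omega2 ((-1 : ℝ), (-1 : ℝ)) v = - omega2 (1,1) v := by
        simp only [omega2]; ring
      rw [this]
      linarith
  · rintro ⟨hv, hpol⟩
    refine ⟨hv, ?_⟩
    have hkey : gauge X x ≤ 1 - |omega2 (1,1) v| := by
      apply gauge_le_of_sPolar n X hconv hcomp hsym h0
      intro y hy
      have h1 : omega2 (1,1) v + symForm n y x ≤ 1 :=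
        hpol ((1,1), y) ⟨by simp, hy⟩
      have h2 : omega2 (-1,-1) v + symForm n y x ≤ 1 :=
        hpol ((-1,-1), y) ⟨by simp, hy⟩
      have hneg : omega2 ((-1 : ℝ), (-1 : ℝ)) v = - omega2 (1,1) v := by
        simp only [omega2]; ring
      rw [hneg] at h2
      rcases abs_cases (omega2 (1,1) v) with ⟨he, _⟩ | ⟨he, _⟩ <;> rw [he] <;> linarith
    linarith
end

section
/- For any positive integer n, there do not exist 2n+2 pairwise distinct points v₁, …, v_{2n+2} in ℝ^{2n} such that ω(v_i, v_j) = 1 for all 1 ≤ i < j ≤ 2n+2, where ω is the standard symplectic form on ℝ^{2n}. -/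
open Set

/-- `symForm n x ·` as a linear map. -/
noncomputable def symPhi (n : ℕ) (x : (Fin n → ℝ) × (Fin n → ℝ)) :
    ((Fin n → ℝ) × (Fin n → ℝ)) →ₗ[ℝ] ℝ where
  toFun y := symForm n x y
  map_add' a b := by
    simp only [symForm, Prod.fst_add, Prod.snd_add, Pi.add_apply, ← Finset.sum_add_distrib]
    exact Finset.sum_congr rfl fun i _ => by ring
  map_smul' c a := by
    simp only [symForm, Prod.smul_fst, Prod.smul_snd, Pi.smul_apply, smul_eq_mul,
      RingHom.id_apply, Finset.mul_sum]
    exact Finset.sum_congr rfl fun i _ => by ring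

lemma symForm_self (n : ℕ) (x : (Fin n → ℝ) × (Fin n → ℝ)) : symForm n x x = 0 := by
  simp [symForm, mul_comm]

lemma symForm_sub (n : ℕ) (x a b : (Fin n → ℝ) × (Fin n → ℝ)) :
    symForm n x (a - b) = symForm n x a - symForm n x b := by
  have := (symPhi n x).map_sub a b
  simpa [symPhi] using this

theorem stmt11 (n : ℕ) (hn : 1 ≤ n) :
    ¬ ∃ v : Fin (2 * n + 2) → (Fin n → ℝ) × (Fin n → ℝ),
        Function.Injective v ∧ ∀ i j, i < j → symForm n (v i) (v j) = 1 := by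
  rintro ⟨v, hinj, hv⟩
  let L : Fin (2 * n + 2) := ⟨2 * n + 1, by omega⟩
  -- linear functionals
  let φ : ℕ → (((Fin n → ℝ) × (Fin n → ℝ)) →ₗ[ℝ] ℝ) := fun k =>
    if h : k < 2 * n + 2 then symPhi n (v ⟨k, h⟩) else 0
  -- difference vectors
  let u : ℕ → (Fin n → ℝ) × (Fin n → ℝ) := fun j => if h : j < 2 * n + 2 then v ⟨j, h⟩ - v L else 0
  -- chain of subspaces
  let W : ℕ → Submodule ℝ ((Fin n → ℝ) × (Fin n → ℝ)) := fun i => ⨅ k ∈ Finset.range i, LinearMap.ker (φ k)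
  have hWmem : ∀ i x, x ∈ W i ↔ ∀ k < i, φ k x = 0 := by
    intro i x
    simp [W, Submodule.mem_iInf, LinearMap.mem_ker]
  -- u i ∈ W i for i ≤ 2n
  have hu_mem : ∀ i ≤ 2 * n, u i ∈ W i := by
    intro i hi
    rw [hWmem]
    intro k hk
    have hk2 : k < 2 * n + 2 := by omega
    have hi2 : i < 2 * n + 2 := by omega
    simp only [φ, u, dif_pos hk2, dif_pos hi2, symPhi, LinearMap.coe_mk, AddHom.coe_mk]
    rw [show symForm n (v ⟨k, hk2⟩) (v ⟨i, hi2⟩ - v L) =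
        symForm n (v ⟨k, hk2⟩) (v ⟨i, hi2⟩) - symForm n (v ⟨k, hk2⟩) (v L) from
      symForm_sub n _ _ _]
    rw [hv ⟨k, hk2⟩ ⟨i, hi2⟩ (Fin.mk_lt_mk.2 hk), hv ⟨k, hk2⟩ L (Fin.mk_lt_mk.2 (by omega))]
    ring
  -- u i ∉ W (i+1) for i ≤ 2n
  have hu_not : ∀ i ≤ 2 * n, u i ∉ W (i + 1) := by
    intro i hi hmem
    rw [hWmem] at hmem
    have := hmem i (by omega)
    have hi2 : i < 2 * n + 2 := by omega
    simp only [φ, u, dif_pos hi2, symPhi, LinearMap.coe_mk, AddHom.coe_mk] at this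
    rw [show symForm n (v ⟨i, hi2⟩) (v ⟨i, hi2⟩ - v L) =
        symForm n (v ⟨i, hi2⟩) (v ⟨i, hi2⟩) - symForm n (v ⟨i, hi2⟩) (v L) from
      symForm_sub n _ _ _, symForm_self,
      hv ⟨i, hi2⟩ L (Fin.mk_lt_mk.2 (by omega))] at this
    norm_num at this
  -- chain is decreasing
  have hmono : ∀ i, W (i + 1) ≤ W i := by
    intro i x hx
    rw [hWmem] at hx ⊢
    exact fun k hk => hx k (by omega)
  -- strict decrease
  have hstrict : ∀ i ≤ 2 * n, W (i + 1) < W i :=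
    fun i hi => lt_of_le_of_ne (hmono i)
      (fun h => hu_not i hi (h ▸ hu_mem i hi))
  -- dimension count
  have hdim : ∀ i ≤ 2 * n + 1, Module.finrank ℝ (W i) + i ≤ 2 * n := by
    intro i hi
    induction i with
    | zero =>
      have : W 0 = ⊤ := by
        apply Submodule.eq_top_iff'.2
        intro x; rw [hWmem]; omega
      rw [this]
      have : Module.finrank ℝ ((Fin n → ℝ) × (Fin n → ℝ)) = 2 * n := by
        simp [Module.finrank_prod]
        omega
      simp [finrank_top, this]
    | succ i ih =>
      have h1 : W (i + 1) < W i := hstrict i (by omega)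
      have h2 : Module.finrank ℝ (W (i + 1)) < Module.finrank ℝ (W i) :=
        Submodule.finrank_lt_finrank_of_lt h1
      have := ih (by omega)
      omega
  have := hdim (2 * n + 1) le_rfl
  omega
end

section
/- Let K ⊂ ℝ^{2n} be a centrally symmetric convex polytope with K ⊆ K^ω, and let S be a centrally symmetric finite subset of K^ω such that |ω(v,w)| ≤ 1 for all v, w ∈ S. Then M = conv(K ∪ S) satisfies M ⊆ M^ω. -/
open Set

lemma symForm_lin_left (n : ℕ) (x z y : (Fin n → ℝ) × (Fin n → ℝ)) (a b : ℝ) :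
    symForm n (a • x + b • z) y = a * symForm n x y + b * symForm n z y := by
  simp only [symForm, Finset.mul_sum, ← Finset.sum_add_distrib, Prod.fst_add, Prod.snd_add,
    Prod.smul_fst, Prod.smul_snd, Pi.add_apply, Pi.smul_apply, smul_eq_mul]
  exact Finset.sum_congr rfl fun i _ => by ring

lemma symForm_antisymm (n : ℕ) (x y : (Fin n → ℝ) × (Fin n → ℝ)) :
    symForm n x y = -symForm n y x := by
  simp only [symForm, ← Finset.sum_neg_distrib]
  exact Finset.sum_congr rfl fun i _ => by ring

lemma symForm_lin_right (n : ℕ) (x z y : (Fin n → ℝ) × (Fin n → ℝ)) (a b : ℝ) :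
    symForm n y (a • x + b • z) = a * symForm n y x + b * symForm n y z := by
  rw [symForm_antisymm, symForm_lin_left, symForm_antisymm n x y, symForm_antisymm n z y]
  ring

lemma convex_left (n : ℕ) (y : (Fin n → ℝ) × (Fin n → ℝ)) :
    Convex ℝ {x : (Fin n → ℝ) × (Fin n → ℝ) | symForm n x y ≤ 1} := by
  intro x hx z hz a b ha hb hab
  simp only [mem_setOf_eq] at *
  rw [symForm_lin_left]
  calc a * symForm n x y + b * symForm n z y ≤ a * 1 + b * 1 := by
        gcongr
      _ = 1 := by linarith

lemma convex_sPolar (n : ℕ) (X : Set ((Fin n → ℝ) × (Fin n → ℝ))) : Convex ℝ (sPolar n X) := by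
  intro y hy z hz a b ha hb hab
  intro x hx
  have := symForm_lin_right n y z x a b
  have h1 := hy x hx
  have h2 := hz x hx
  calc symForm n x (a • y + b • z) = a * symForm n x y + b * symForm n x z :=
        symForm_lin_right n y z x a b
    _ ≤ a * 1 + b * 1 := by gcongr
    _ = 1 := by linarith

theorem stmt13 (n : ℕ) (V : Set ((Fin n → ℝ) × (Fin n → ℝ))) (hVfin : V.Finite)
    (hVsym : ∀ v ∈ V, -v ∈ V)
    (K : Set ((Fin n → ℝ) × (Fin n → ℝ))) (hK : K = convexHull ℝ V)
    (h0 : (0 : (Fin n → ℝ) × (Fin n → ℝ)) ∈ interior K)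
    (hKsub : K ⊆ sPolar n K)
    (S : Set ((Fin n → ℝ) × (Fin n → ℝ))) (hSfin : S.Finite)
    (hSsym : ∀ v ∈ S, -v ∈ S) (hSsub : S ⊆ sPolar n K)
    (hSω : ∀ v ∈ S, ∀ w ∈ S, |symForm n v w| ≤ 1) :
    convexHull ℝ (K ∪ S) ⊆ sPolar n (convexHull ℝ (K ∪ S)) := by
  -- K is symmetric
  have hKsym : ∀ x ∈ K, -x ∈ K := by
    intro x hx
    rw [hK] at hx ⊢
    have : -V ⊆ V := by intro v hv; simpa using hVsym (-v) hv
    have h := convexHull_mono this (𝕜 := ℝ)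
    rw [convexHull_neg] at h
    exact h (by simpa using hx)
  -- key: elements of K ∪ S pair to ≤ 1
  have key : ∀ x ∈ K ∪ S, ∀ y ∈ K ∪ S, symForm n x y ≤ 1 := by
    rintro x (hx | hx) y (hy | hy)
    · exact hKsub hy x hx
    · exact hSsub hy x hx
    · -- x ∈ S, y ∈ K : symForm x y = symForm (-y) x
      have : symForm n x y = symForm n (-y) x := by
        rw [symForm_antisymm n x y]
        have : (-y) = (-1 : ℝ) • y + (0 : ℝ) • y := by simp
        rw [this, symForm_lin_left]; ring
      rw [this]
      exact hSsub hx (-y) (hKsym y hy)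
    · exact le_trans (le_abs_self _) (hSω x hx y hy)
  -- step 1: K ∪ S ⊆ sPolar n (K ∪ S), and sPolar is convex
  have step1 : convexHull ℝ (K ∪ S) ⊆ sPolar n (K ∪ S) :=
    convexHull_min (fun y hy x hx => key x hx y hy) (convex_sPolar n _)
  intro y hy x hx
  -- x ∈ convexHull (K ∪ S), y ∈ sPolar (K ∪ S); use convexity in x
  have hconv : convexHull ℝ (K ∪ S) ⊆ {x | symForm n x y ≤ 1} :=
    convexHull_min (fun x hx => step1 hy x hx) (convex_left n y)
  exact hconv hx
end

section
/- Define a_n = (2n/(2n+1))^n · Γ(n+3/4)/Γ(n+1/2) · Γ(1/2)/Γ(3/4) for positive integers n. Then a₁ = 1 and the sequence (a_n) is strictly increasing: a_{n+1}/a_n > 1 for all n ≥ 1. -/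
open Real

/-- `a n = (2n/(2n+1))^n · Γ(n+3/4)/Γ(n+1/2) · Γ(1/2)/Γ(3/4)`. -/
noncomputable def aSeq (n : ℕ) : ℝ :=
  ((2 * n : ℝ) / (2 * n + 1)) ^ n * (Gamma ((n : ℝ) + 3/4) / Gamma ((n : ℝ) + 1/2)) *
    (Gamma (1/2) / Gamma (3/4))

theorem stmt15 : aSeq 1 = 1 ∧ ∀ n : ℕ, 1 ≤ n → aSeq (n + 1) / aSeq n > 1 := by
  have g34 : 0 < Gamma (3/4:ℝ) := Real.Gamma_pos_of_pos (by norm_num)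
  have g12 : 0 < Gamma (1/2:ℝ) := Real.Gamma_pos_of_pos (by norm_num)
  constructor
  · unfold aSeq
    push_cast
    have h1 : Gamma ((1:ℝ) + 3/4) = (3/4) * Gamma (3/4) := by
      rw [show (1:ℝ)+3/4 = 3/4 + 1 by ring, Real.Gamma_add_one (by norm_num)]
    have h2 : Gamma ((1:ℝ) + 1/2) = (1/2) * Gamma (1/2) := by
      rw [show (1:ℝ)+1/2 = 1/2 + 1 by ring, Real.Gamma_add_one (by norm_num)]
    rw [h1, h2]
    field_simp
    ring
  · intro n hn
    set x : ℝ := (n : ℝ) with hxdef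
    have hx : (1:ℝ) ≤ x := by rw [hxdef]; exact_mod_cast hn
    have G34 : 0 < Gamma (x + 3/4) := Real.Gamma_pos_of_pos (by linarith)
    have G12 : 0 < Gamma (x + 1/2) := Real.Gamma_pos_of_pos (by linarith)
    have hg1 : Gamma (x + 1 + 3/4) = (x + 3/4) * Gamma (x + 3/4) := by
      rw [show x + 1 + 3/4 = (x + 3/4) + 1 by ring, Real.Gamma_add_one (by linarith)]
    have hg2 : Gamma (x + 1 + 1/2) = (x + 1/2) * Gamma (x + 1/2) := by
      rw [show x + 1 + 1/2 = (x + 1/2) + 1 by ring, Real.Gamma_add_one (by linarith)]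
    have haseq : 0 < aSeq n := by
      unfold aSeq
      rw [← hxdef]
      have : 0 < ((2*x)/(2*x+1))^n := by positivity
      positivity
    set r : ℝ := ((2*x+2)/(2*x+3))^(n+1) * ((2*x+1)/(2*x))^n * ((x+3/4)/(x+1/2)) with hr
    have key : aSeq (n+1) = r * aSeq n := by
      unfold aSeq
      push_cast
      rw [← hxdef, hg1, hg2, hr]
      have hBB : ((2*x+1)/(2*x))^n * ((2*x)/(2*x+1))^n = 1 := by
        rw [← mul_pow, div_mul_div_comm, mul_comm (2*x+1) (2*x), div_self (by positivity), one_pow]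
      rw [show 2*(x+1) = 2*x+2 by ring, show 2*x+2+1 = 2*x+3 by ring, mul_div_mul_comm]
      linear_combination (-(((2*x+2)/(2*x+3))^(n+1) * ((x+3/4)/(x+1/2)) * (Gamma (x+3/4)/Gamma (x+1/2)) * (Gamma (1/2)/Gamma (3/4)))) * hBB
    rw [key, mul_div_assoc, div_self (ne_of_gt haseq), mul_one]
    -- now show r > 1
    have hdenpos : (0:ℝ) < (2*x+3)*(2*x) := by nlinarith
    have hT : (2*x+4)/(2*x+3) ≤ ((2*x+2)*(2*x+1)/((2*x+3)*(2*x)))^n := by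
      have h1 : (2*x+2)*(2*x+1)/((2*x+3)*(2*x)) = 1 + 2/((2*x+3)*(2*x)) := by
        field_simp; ring
      have h2 : 1 + (n:ℝ) * (2/((2*x+3)*(2*x))) ≤ (1 + 2/((2*x+3)*(2*x)))^n := by
        apply one_add_mul_le_pow
        have : (0:ℝ) ≤ 2/((2*x+3)*(2*x)) := by positivity
        linarith
      have h3 : 1 + x * (2/((2*x+3)*(2*x))) = (2*x+4)/(2*x+3) := by
        field_simp; ring
      rw [h1, ← h3]
      exact_mod_cast h2
    have hrsplit : r = (2*x+2)/(2*x+3) * ((2*x+2)*(2*x+1)/((2*x+3)*(2*x)))^n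
        * ((x+3/4)/(x+1/2)) := by
      have hmp : ((2*x+2)*(2*x+1)/((2*x+3)*(2*x)))^n
          = ((2*x+2)/(2*x+3))^n * ((2*x+1)/(2*x))^n := by
        rw [← mul_pow, div_mul_div_comm]
      rw [hr, pow_succ, hmp]
      ring
    have hge : (2*x+2)/(2*x+3) * ((2*x+4)/(2*x+3)) * ((x+3/4)/(x+1/2)) ≤ r := by
      rw [hrsplit]
      gcongr
    have hlt : (1:ℝ) < (2*x+2)/(2*x+3) * ((2*x+4)/(2*x+3)) * ((x+3/4)/(x+1/2)) := by
      rw [div_mul_div_comm, div_mul_div_comm, lt_div_iff₀ (by positivity)]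
      nlinarith
    exact lt_of_lt_of_le hlt hge
end
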